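/- Let γ ∈ (0,1], σ > 0 and θ₁ > 0. There exists a constant C > 0, depending only on γ, σ and θ₁, such that for every z ∈ [0, θ₁/2], every k ∈ ℤ³ with k ≠ 0, every t ≥ 0 and every measurable function b : [0,t] → [0,∞), one has exp(z⟨k,kt⟩^γ)·⟨k,kt⟩^σ · ∫₀^t exp(−θ₁·|k|·(t−s))·b(s) ds ≤ C·∫₀^t exp(−(θ₁/4)·(t−s))·exp(z⟨k,ks⟩^γ)·⟨k,ks⟩^σ·b(s) ds. -/

import Mathlib

/-- Euclidean norm of a lattice point `k ∈ ℤ³`, viewed as a vector of `ℝ³`. -/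
noncomputable def knorm (k : Fin 3 → ℤ) : ℝ := Real.sqrt (∑ i, ((k i : ℝ)) ^ 2)

/-- Japanese bracket `⟨k, kt⟩ = √(1 + |k|² + |kt|²)`. -/
noncomputable def jb (k : Fin 3 → ℤ) (t : ℝ) : ℝ :=
  Real.sqrt (1 + (∑ i, ((k i : ℝ)) ^ 2) + (∑ i, (t * (k i : ℝ)) ^ 2))

lemma jb_eq (k : Fin 3 → ℤ) (t : ℝ) :
    jb k t = Real.sqrt (1 + (∑ i, ((k i : ℝ)) ^ 2) + t ^ 2 * (∑ i, ((k i : ℝ)) ^ 2)) := by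
  have h : ∑ i, (t * (k i : ℝ)) ^ 2 = t ^ 2 * ∑ i, ((k i : ℝ)) ^ 2 := by
    rw [Finset.mul_sum]
    exact Finset.sum_congr rfl fun i _ => by ring
  rw [jb, h]

lemma one_le_jb (k : Fin 3 → ℤ) (t : ℝ) : 1 ≤ jb k t := by
  rw [jb]
  rw [Real.one_le_sqrt]
  have h1 : 0 ≤ ∑ i, ((k i : ℝ)) ^ 2 := Finset.sum_nonneg fun i _ => sq_nonneg _
  have h2 : 0 ≤ ∑ i, (t * (k i : ℝ)) ^ 2 := Finset.sum_nonneg fun i _ => sq_nonneg _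
  linarith

lemma one_le_knorm {k : Fin 3 → ℤ} (hk : k ≠ 0) : 1 ≤ knorm k := by
  rw [knorm, Real.one_le_sqrt]
  obtain ⟨i, hi⟩ : ∃ i, k i ≠ 0 := by
    by_contra h
    push_neg at h
    exact hk (funext h)
  have h1 : (1 : ℝ) ≤ ((k i : ℝ)) ^ 2 := by
    have : (1 : ℤ) ≤ |k i| := Int.one_le_abs hi
    have : (1 : ℝ) ≤ |(k i : ℝ)| := by exact_mod_cast (by simpa using this)
    nlinarith [abs_nonneg ((k i : ℝ)), sq_abs ((k i : ℝ))]
  calc (1 : ℝ) ≤ ((k i : ℝ)) ^ 2 := h1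
    _ ≤ ∑ j, ((k j : ℝ)) ^ 2 :=
        Finset.single_le_sum (f := fun j => ((k j : ℝ)) ^ 2) (fun j _ => sq_nonneg _) (Finset.mem_univ i)

lemma knorm_nonneg (k : Fin 3 → ℤ) : 0 ≤ knorm k := Real.sqrt_nonneg _

lemma jb_lipschitz (k : Fin 3 → ℤ) {s t : ℝ} (hs : 0 ≤ s) (hst : s ≤ t) :
    jb k t ≤ jb k s + knorm k * (t - s) := by
  set K2 := ∑ i, ((k i : ℝ)) ^ 2 with hK2def
  have hK2 : 0 ≤ K2 := Finset.sum_nonneg fun i _ => sq_nonneg _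
  set K := knorm k with hKdef
  set B := jb k s with hBdef
  have hK : 0 ≤ K := Real.sqrt_nonneg _
  have hB : 0 ≤ B := Real.sqrt_nonneg _
  have hKsq : K ^ 2 = K2 := Real.sq_sqrt hK2
  have hBsq : B ^ 2 = 1 + K2 + s ^ 2 * K2 := by
    rw [hBdef, jb_eq]; exact Real.sq_sqrt (by nlinarith)
  have hBsK : s * K ≤ B := by
    have h1 : s * K = Real.sqrt ((s * K) ^ 2) := (Real.sqrt_sq (by positivity)).symm
    rw [h1, hBdef, jb_eq]
    apply Real.sqrt_le_sqrt
    nlinarith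
  rw [jb_eq]
  have htarget : 1 + K2 + t ^ 2 * K2 ≤ (B + K * (t - s)) ^ 2 := by
    nlinarith [mul_nonneg (mul_nonneg hK (sub_nonneg.2 hst)) (sub_nonneg.2 hBsK),
      sq_nonneg (t - s), mul_nonneg hK2 (sq_nonneg (t - s))]
  calc Real.sqrt (1 + K2 + t ^ 2 * K2) ≤ Real.sqrt ((B + K * (t - s)) ^ 2) :=
        Real.sqrt_le_sqrt htarget
    _ = B + K * (t - s) := Real.sqrt_sq (by nlinarith [sub_nonneg.2 hst])

lemma rpow_subadd {γ : ℝ} (hγ0 : 0 < γ) (hγ1 : γ ≤ 1) {x y : ℝ} (hx : 0 ≤ x) (hy : 0 ≤ y) :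
    (x + y) ^ γ ≤ x ^ γ + y ^ γ := by
  have h := NNReal.rpow_add_le_add_rpow x.toNNReal y.toNNReal hγ0.le hγ1
  have h2 := NNReal.coe_le_coe.2 h
  push_cast [NNReal.coe_rpow] at h2
  rwa [Real.coe_toNNReal _ hx, Real.coe_toNNReal _ hy] at h2

lemma rpow_le_one_add {γ : ℝ} (hγ0 : 0 < γ) (hγ1 : γ ≤ 1) {u : ℝ} (hu : 0 ≤ u) :
    u ^ γ ≤ 1 + u := by
  rcases le_total u 1 with h | h
  · have := Real.rpow_le_one hu h hγ0.le
    linarith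
  · calc u ^ γ ≤ u ^ (1 : ℝ) := Real.rpow_le_rpow_of_exponent_le h hγ1
      _ = u := Real.rpow_one u
      _ ≤ 1 + u := by linarith

/-- The key pointwise estimate. -/
lemma key_pointwise {γ σ θ₁ z : ℝ} (hγ0 : 0 < γ) (hγ1 : γ ≤ 1) (hσ : 0 < σ) (hθ : 0 < θ₁)
    (hz0 : 0 ≤ z) (hz : z ≤ θ₁ / 2) {k : Fin 3 → ℤ} (hk : k ≠ 0) {s t : ℝ}
    (hs : 0 ≤ s) (hst : s ≤ t) :
    Real.exp (z * jb k t ^ γ) * jb k t ^ σ * Real.exp (-θ₁ * knorm k * (t - s)) ≤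
      (Real.exp (θ₁ / 2) * (1 + 4 * σ / θ₁) ^ σ) *
        (Real.exp (-(θ₁ / 4) * (t - s)) * Real.exp (z * jb k s ^ γ) * jb k s ^ σ) := by
  set K := knorm k with hKdef
  set A := jb k t with hAdef
  set B := jb k s with hBdef
  set u := t - s with hudef
  have hu : 0 ≤ u := sub_nonneg.2 hst
  have hK1 : 1 ≤ K := one_le_knorm hk
  have hK : 0 ≤ K := le_trans zero_le_one hK1
  have hA1 : 1 ≤ A := one_le_jb k t
  have hB1 : 1 ≤ B := one_le_jb k s
  have hA : 0 ≤ A := le_trans zero_le_one hA1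
  have hB : 0 ≤ B := le_trans zero_le_one hB1
  have hKu : 0 ≤ K * u := mul_nonneg hK hu
  have hAB : A ≤ B + K * u := jb_lipschitz k hs hst
  clear_value K A B u
  -- exponential part
  have hexp1 : z * A ^ γ ≤ z * B ^ γ + θ₁ / 2 + θ₁ / 2 * (K * u) := by
    have h1 : A ^ γ ≤ (B + K * u) ^ γ := Real.rpow_le_rpow hA hAB hγ0.le
    have h2 : (B + K * u) ^ γ ≤ B ^ γ + (K * u) ^ γ := rpow_subadd hγ0 hγ1 hB hKu
    have h3 : (K * u) ^ γ ≤ 1 + K * u := rpow_le_one_add hγ0 hγ1 hKu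
    have h4 : z * A ^ γ ≤ z * (B ^ γ + (1 + K * u)) := by
      apply mul_le_mul_of_nonneg_left _ hz0
      calc A ^ γ ≤ (B + K * u) ^ γ := h1
        _ ≤ B ^ γ + (K * u) ^ γ := h2
        _ ≤ B ^ γ + (1 + K * u) := by linarith
    have h5 : z * (B ^ γ + (1 + K * u)) ≤ z * B ^ γ + θ₁ / 2 + θ₁ / 2 * (K * u) := by
      have h6 := mul_le_mul_of_nonneg_right hz hKu
      nlinarith
    exact le_trans h4 h5
  -- polynomial part
  have hpoly : A ^ σ ≤ (1 + 4 * σ / θ₁) ^ σ * Real.exp (θ₁ / 4 * (K * u)) * B ^ σ := by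
    obtain ⟨ε, hεdef⟩ : ∃ ε : ℝ, ε = θ₁ / (4 * σ) := ⟨_, rfl⟩
    have hε : 0 < ε := by rw [hεdef]; positivity
    have h1 : A ≤ B * (1 + K * u) := by nlinarith
    have h2 : (1 : ℝ) + K * u ≤ (1 + 1 / ε) * Real.exp (ε * (K * u)) := by
      have he : 1 + ε * (K * u) ≤ Real.exp (ε * (K * u)) := by linarith [Real.add_one_le_exp (ε * (K * u))]
      have h3 : (1 : ℝ) + K * u ≤ (1 + 1 / ε) * (1 + ε * (K * u)) := by
        have : (1 + 1 / ε) * (1 + ε * (K * u)) = 1 + ε * (K * u) + 1 / ε + K * u := by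
          field_simp; ring
        rw [this]
        nlinarith [mul_nonneg hε.le hKu, le_of_lt (one_div_pos.2 hε)]
      calc (1 : ℝ) + K * u ≤ (1 + 1 / ε) * (1 + ε * (K * u)) := h3
        _ ≤ (1 + 1 / ε) * Real.exp (ε * (K * u)) := by
            apply mul_le_mul_of_nonneg_left he (by positivity)
    have h4 : A ^ σ ≤ (B * ((1 + 1 / ε) * Real.exp (ε * (K * u)))) ^ σ := by
      apply Real.rpow_le_rpow hA _ hσ.le
      calc A ≤ B * (1 + K * u) := h1
        _ ≤ B * ((1 + 1 / ε) * Real.exp (ε * (K * u))) :=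
            mul_le_mul_of_nonneg_left h2 hB
    have h5 : (B * ((1 + 1 / ε) * Real.exp (ε * (K * u)))) ^ σ =
        B ^ σ * ((1 + 1 / ε) ^ σ * Real.exp (ε * (K * u)) ^ σ) := by
      rw [Real.mul_rpow hB (by positivity), Real.mul_rpow (by positivity) (Real.exp_nonneg _)]
    have h6 : Real.exp (ε * (K * u)) ^ σ = Real.exp (θ₁ / 4 * (K * u)) := by
      rw [← Real.exp_mul]
      congr 1
      rw [hεdef]
      field_simp
    have h7 : 1 + 1 / ε = 1 + 4 * σ / θ₁ := by
      rw [hεdef]; congr 1; rw [one_div_div]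
    rw [h5, h6, h7] at h4
    linarith [h4]
  -- combine
  have hKuu : u ≤ K * u := by nlinarith
  have key1 : Real.exp (z * A ^ γ) * Real.exp (-(3 * θ₁ / 4) * (K * u)) ≤
      Real.exp (θ₁ / 2) * Real.exp (z * B ^ γ) * Real.exp (-(θ₁ / 4) * (K * u)) := by
    rw [← Real.exp_add, ← Real.exp_add, ← Real.exp_add]
    apply Real.exp_le_exp.2
    linarith
  have key2 : A ^ σ * Real.exp (-(θ₁ / 4) * (K * u)) ≤ (1 + 4 * σ / θ₁) ^ σ * B ^ σ := by
    have := mul_le_mul_of_nonneg_right hpoly (Real.exp_nonneg (-(θ₁ / 4) * (K * u)))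
    calc A ^ σ * Real.exp (-(θ₁ / 4) * (K * u))
        ≤ (1 + 4 * σ / θ₁) ^ σ * Real.exp (θ₁ / 4 * (K * u)) * B ^ σ *
            Real.exp (-(θ₁ / 4) * (K * u)) := this
      _ = (1 + 4 * σ / θ₁) ^ σ * B ^ σ *
            (Real.exp (θ₁ / 4 * (K * u)) * Real.exp (-(θ₁ / 4) * (K * u))) := by ring
      _ = (1 + 4 * σ / θ₁) ^ σ * B ^ σ := by
          rw [← Real.exp_add]
          norm_num
  have hsplit : Real.exp (-θ₁ * K * u) =
      Real.exp (-(3 * θ₁ / 4) * (K * u)) * Real.exp (-(θ₁ / 4) * (K * u)) := by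
    rw [← Real.exp_add]; congr 1; ring
  have hmono : Real.exp (-(θ₁ / 4) * (K * u)) ≤ Real.exp (-(θ₁ / 4) * u) := by
    apply Real.exp_le_exp.2
    nlinarith [mul_le_mul_of_nonneg_left hKuu (by positivity : (0:ℝ) ≤ θ₁ / 4)]
  calc Real.exp (z * A ^ γ) * A ^ σ * Real.exp (-θ₁ * K * u)
      = (Real.exp (z * A ^ γ) * Real.exp (-(3 * θ₁ / 4) * (K * u))) *
          (A ^ σ * Real.exp (-(θ₁ / 4) * (K * u))) := by rw [hsplit]; ring
    _ ≤ (Real.exp (θ₁ / 2) * Real.exp (z * B ^ γ) * Real.exp (-(θ₁ / 4) * (K * u))) *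
          ((1 + 4 * σ / θ₁) ^ σ * B ^ σ) := by
        apply mul_le_mul key1 key2
          (mul_nonneg (Real.rpow_nonneg hA σ) (Real.exp_nonneg _)) (by positivity)
    _ ≤ (Real.exp (θ₁ / 2) * Real.exp (z * B ^ γ) * Real.exp (-(θ₁ / 4) * u)) *
          ((1 + 4 * σ / θ₁) ^ σ * B ^ σ) := by
        apply mul_le_mul_of_nonneg_right _
          (mul_nonneg (Real.rpow_nonneg (by positivity) σ) (Real.rpow_nonneg hB σ))
        exact mul_le_mul_of_nonneg_left hmono (by positivity)
    _ = (Real.exp (θ₁ / 2) * (1 + 4 * σ / θ₁) ^ σ) *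
          (Real.exp (-(θ₁ / 4) * u) * Real.exp (z * B ^ γ) * B ^ σ) := by ring

/-- Integrated weight estimate converting the resolvent-kernel decay `e^{−θ₁|k|(t−s)}`
into the time-decaying kernel `e^{−(θ₁/4)(t−s)}` acting on weighted coefficients. -/
theorem integrated_weight_estimate {γ σ θ₁ : ℝ} (hγ0 : 0 < γ) (hγ1 : γ ≤ 1)
    (hσ : 0 < σ) (hθ : 0 < θ₁) :
    ∃ C : ℝ, 0 < C ∧ ∀ z : ℝ, 0 ≤ z → z ≤ θ₁ / 2 → ∀ k : Fin 3 → ℤ, k ≠ 0 →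
      ∀ t : ℝ, 0 ≤ t → ∀ b : ℝ → ENNReal, Measurable b →
        ENNReal.ofReal (Real.exp (z * jb k t ^ γ) * jb k t ^ σ) *
            ∫⁻ s in Set.Icc (0 : ℝ) t,
              ENNReal.ofReal (Real.exp (-θ₁ * knorm k * (t - s))) * b s ≤
          ENNReal.ofReal C *
            ∫⁻ s in Set.Icc (0 : ℝ) t,
              ENNReal.ofReal (Real.exp (-(θ₁ / 4) * (t - s)) *
                Real.exp (z * jb k s ^ γ) * jb k s ^ σ) * b s := by
  refine ⟨Real.exp (θ₁ / 2) * (1 + 4 * σ / θ₁) ^ σ, by positivity,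
    fun z hz0 hz k hk t ht b hb => ?_⟩
  rw [← MeasureTheory.lintegral_const_mul' _ _ ENNReal.ofReal_ne_top,
    ← MeasureTheory.lintegral_const_mul' _ _ ENNReal.ofReal_ne_top]
  apply MeasureTheory.lintegral_mono_ae
  rw [MeasureTheory.ae_restrict_iff' measurableSet_Icc]
  filter_upwards with s hs
  obtain ⟨hs0, hst⟩ := hs
  have hWnn : 0 ≤ Real.exp (z * jb k t ^ γ) * jb k t ^ σ :=
    mul_nonneg (Real.exp_nonneg _)
      (Real.rpow_nonneg (le_trans zero_le_one (one_le_jb k t)) σ)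
  have hCnn : (0 : ℝ) ≤ Real.exp (θ₁ / 2) * (1 + 4 * σ / θ₁) ^ σ := by positivity
  rw [← mul_assoc, ← mul_assoc, ← ENNReal.ofReal_mul hWnn, ← ENNReal.ofReal_mul hCnn]
  exact mul_le_mul_left
    (ENNReal.ofReal_le_ofReal (key_pointwise hγ0 hγ1 hσ hθ hz0 hz hk hs0 hst)) _
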